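/- Let X_1, ..., X_m be (not necessarily independent) nonnegative real random variables such that P(X_i > x) < β·e^{-αx} for all i and all x > 0, where α, β > 0. Then for every ε > 0 there exists β' = 1 + β/ε such that the average X̄ = (1/m)·Σ X_i satisfies P(X̄ > x) < β'·e^{-αx/(1+ε)} for every x > 0. -/

import Mathlib

open MeasureTheory Real Set
open scoped ENNReal

namespace AvgExpDecayAux

variable {Ω : Type*} [MeasurableSpace Ω]

/-- Intersections of measurable hulls of the superlevel sets at rational levels `≤ q`. -/
def hb (μ : Measure Ω) (X : Ω → ℝ) (q : ℚ) : Set Ω :=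
  ⋂ (q' : ℚ) (_ : q' ≤ q), toMeasurable μ {ω | (q' : ℝ) < X ω}

lemma hb_meas (μ : Measure Ω) (X : Ω → ℝ) (q : ℚ) : MeasurableSet (hb μ X q) :=
  MeasurableSet.iInter fun _ => MeasurableSet.iInter fun _ => measurableSet_toMeasurable _ _

lemma hb_antitone (μ : Measure Ω) (X : Ω → ℝ) {q₁ q₂ : ℚ} (h : q₁ ≤ q₂) :
    hb μ X q₂ ⊆ hb μ X q₁ := by
  intro ω hω
  refine Set.mem_iInter₂.2 fun q' hq' => Set.mem_iInter₂.1 hω q' (hq'.trans h)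

lemma mem_hb (μ : Measure Ω) (X : Ω → ℝ) {q : ℚ} {ω : Ω} (h : (q : ℝ) < X ω) :
    ω ∈ hb μ X q := by
  refine Set.mem_iInter₂.2 fun q' hq' => subset_toMeasurable _ _ ?_
  exact lt_of_le_of_lt (by exact_mod_cast hq') h

/-- A measurable majorant of `X` with the same tail bounds. -/
noncomputable def hull (μ : Measure Ω) (X : Ω → ℝ) : Ω → ℝ≥0∞ :=
  fun ω => ⨆ q : {q : ℚ // 0 < q},
    (hb μ X (q : ℚ)).indicator (fun _ => ENNReal.ofReal ((q : ℚ) : ℝ)) ω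

lemma hull_measurable (μ : Measure Ω) (X : Ω → ℝ) : Measurable (hull μ X) :=
  Measurable.iSup fun q => (measurable_const.indicator (hb_meas μ X q))

lemma le_hull (μ : Measure Ω) (X : Ω → ℝ) (ω : Ω) :
    ENNReal.ofReal (X ω) ≤ hull μ X ω := by
  rcases le_or_gt (X ω) 0 with h | h
  · simp [ENNReal.ofReal_of_nonpos h]
  rcases eq_or_ne (hull μ X ω) ⊤ with htop | htop
  · simp [htop]
  have key : ∀ q : ℚ, 0 < q → (q : ℝ) < X ω → ENNReal.ofReal (q : ℝ) ≤ hull μ X ω := by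
    intro q hq hqX
    refine le_iSup_of_le ⟨q, hq⟩ ?_
    rw [Set.indicator_of_mem (mem_hb μ X hqX)]
  rw [← ENNReal.ofReal_toReal htop]
  apply ENNReal.ofReal_le_ofReal
  by_contra hcon
  push_neg at hcon
  obtain ⟨q, hq1, hq2⟩ := exists_rat_btwn hcon
  have hq0 : 0 < q := by
    have := lt_of_le_of_lt ENNReal.toReal_nonneg hq1
    exact_mod_cast this
  have hk := key q hq0 hq2
  rw [← ENNReal.ofReal_toReal htop] at hk
  have := (ENNReal.ofReal_le_ofReal_iff ENNReal.toReal_nonneg).1 hk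
  exact absurd this (not_le.2 hq1)

lemma hull_tail (μ : Measure Ω) (X : Ω → ℝ) {t : ℝ} (ht : 0 < t) :
    μ {ω | ENNReal.ofReal t < hull μ X ω} ≤ μ {ω | t < X ω} := by
  classical
  set s : {q : ℚ // t < (q : ℝ)} → Set Ω := fun q => hb μ X q with hs
  have hsub : {ω | ENNReal.ofReal t < hull μ X ω} ⊆ ⋃ q, s q := by
    intro ω hω
    rw [Set.mem_setOf_eq, hull, lt_iSup_iff] at hω
    obtain ⟨q, hq⟩ := hω
    by_cases hmem : ω ∈ hb μ X q
    · rw [Set.indicator_of_mem hmem] at hq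
      have htq : t < ((q : ℚ) : ℝ) :=
        (ENNReal.ofReal_lt_ofReal_iff_of_nonneg ht.le).1 hq
      exact Set.mem_iUnion.2 ⟨⟨q, htq⟩, hmem⟩
    · rw [Set.indicator_of_notMem hmem] at hq
      exact absurd hq (by simp)
  have hdir : Directed (· ⊆ ·) s := by
    intro q₁ q₂
    rcases le_total (q₁ : ℚ) (q₂ : ℚ) with h | h
    · exact ⟨⟨q₁, q₁.2⟩, le_refl _, hb_antitone μ X h⟩
    · exact ⟨⟨q₂, q₂.2⟩, hb_antitone μ X h, le_refl _⟩
  calc μ {ω | ENNReal.ofReal t < hull μ X ω} ≤ μ (⋃ q, s q) := measure_mono hsub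
    _ = ⨆ q, μ (s q) := Directed.measure_iUnion hdir
    _ ≤ μ {ω | t < X ω} := by
        refine iSup_le fun q => ?_
        have h1 : s q ⊆ toMeasurable μ {ω | ((q : ℚ) : ℝ) < X ω} :=
          fun ω hω => Set.mem_iInter₂.1 hω q le_rfl
        calc μ (s q) ≤ μ (toMeasurable μ {ω | ((q : ℚ) : ℝ) < X ω}) := measure_mono h1
          _ = μ {ω | ((q : ℚ) : ℝ) < X ω} := measure_toMeasurable _
          _ ≤ μ {ω | t < X ω} := measure_mono fun ω hω => lt_trans q.2 hω

lemma exp_avg_le {m : ℕ} (hm : 0 < m) (a : Fin m → ℝ) :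
    Real.exp ((1 / m : ℝ) * ∑ i, a i) ≤ (1 / m : ℝ) * ∑ i, Real.exp (a i) := by
  have hw : ∀ i ∈ (Finset.univ : Finset (Fin m)), (0:ℝ) ≤ (1/m : ℝ) := fun _ _ => by positivity
  have h1 : ∑ _i : Fin m, (1/m : ℝ) = 1 := by
    simp [Finset.sum_const, Finset.card_univ]
    field_simp
  have hmem : ∀ i ∈ Finset.univ, a i ∈ (Set.univ : Set ℝ) := fun _ _ => trivial
  have := convexOn_exp.map_sum_le hw h1 hmem
  simp only [smul_eq_mul] at this
  calc Real.exp ((1/m : ℝ) * ∑ i, a i) = Real.exp (∑ i, (1/m : ℝ) * a i) := by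
        rw [Finset.mul_sum]
    _ ≤ ∑ i, (1/m : ℝ) * Real.exp (a i) := this
    _ = (1/m : ℝ) * ∑ i, Real.exp (a i) := by rw [Finset.mul_sum]

lemma integral_s_exp {s : ℝ} (hs : 0 < s) (r : ℝ) :
    ∫ t in (0:ℝ)..r, s * Real.exp (s * t) = Real.exp (s * r) - 1 := by
  have h := intervalIntegral.integral_comp_mul_left (fun u => Real.exp u) (a := (0:ℝ)) (b := r) hs.ne'
  rw [intervalIntegral.integral_const_mul, h]
  rw [integral_exp]
  simp [mul_comm]
  field_simp

lemma sexp_intble (s : ℝ) (t : ℝ) : IntervalIntegrable (fun u => s * Real.exp (s * u)) volume 0 t :=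
  ((continuous_const.mul ((continuous_const.mul continuous_id).rexp)).intervalIntegrable _ _)

lemma J_compute {α s β : ℝ} (hs : 0 < s) (hsα : s < α) (hβ : 0 ≤ β) :
    ∫⁻ t in Set.Ioi (0:ℝ), ENNReal.ofReal (β * Real.exp (-α * t)) * ENNReal.ofReal (s * Real.exp (s * t)) =
      ENNReal.ofReal (β * s / (α - s)) := by
  have hc : 0 < α - s := by linarith
  have heq : ∀ t : ℝ, ENNReal.ofReal (β * Real.exp (-α * t)) * ENNReal.ofReal (s * Real.exp (s * t)) =
      ENNReal.ofReal (β * s * Real.exp (-(α - s) * t)) := by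
    intro t
    rw [← ENNReal.ofReal_mul (by positivity)]
    congr 1
    rw [show β * rexp (-α * t) * (s * rexp (s * t)) = β * s * (rexp (-α * t) * rexp (s*t)) by ring,
      ← Real.exp_add]
    ring_nf
  simp_rw [heq]
  have hint : IntegrableOn (fun t : ℝ => β * s * Real.exp (-(α - s) * t)) (Set.Ioi 0) :=
    (exp_neg_integrableOn_Ioi 0 hc).const_mul _
  rw [← ofReal_integral_eq_lintegral_ofReal hint (by
    filter_upwards with t using by positivity)]
  congr 1
  rw [MeasureTheory.integral_const_mul]
  have : ∫ t in Set.Ioi (0:ℝ), Real.exp (-(α - s) * t) = (α - s)⁻¹ := by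
    have h2 := integral_comp_mul_left_Ioi (fun u => Real.exp (-u)) (0:ℝ) hc
    simp only [mul_zero, neg_mul] at h2 ⊢
    rw [h2, integral_exp_neg_Ioi_zero]
    simp
  rw [this]
  field_simp

lemma key_bound (μ : Measure Ω) [IsProbabilityMeasure μ]
    (Y : Ω → ℝ) (hY : Measurable Y) (hY0 : ∀ ω, 0 ≤ Y ω)
    {α s β : ℝ} (hs : 0 < s) (hsα : s < α) (hβ : 0 < β)
    (htail : ∀ t : ℝ, 0 < t → μ {ω | t < Y ω} < ENNReal.ofReal (β * Real.exp (-α * t))) :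
    ∫⁻ ω, ENNReal.ofReal (Real.exp (s * Y ω)) ∂μ < 1 + ENNReal.ofReal (β * s / (α - s)) := by
  set F : ℝ → ℝ≥0∞ := fun t => μ {ω | t < Y ω} with hF
  set E : ℝ → ℝ≥0∞ := fun t => ENNReal.ofReal (s * Real.exp (s * t)) with hE
  set G : ℝ → ℝ≥0∞ := fun t => ENNReal.ofReal (β * Real.exp (-α * t)) with hG
  have hFmeas : Measurable F :=
    Antitone.measurable (fun t₁ t₂ h => measure_mono (fun ω hω => lt_of_le_of_lt h hω))
  have hEmeas : Measurable E :=
    (ENNReal.measurable_ofReal.comp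
      ((continuous_const.mul ((continuous_const.mul continuous_id).rexp)).measurable))
  have hGmeas : Measurable G :=
    (ENNReal.measurable_ofReal.comp
      ((continuous_const.mul ((continuous_const.mul continuous_id).rexp)).measurable))
  have hdec : ∀ ω, ENNReal.ofReal (Real.exp (s * Y ω)) =
      1 + ENNReal.ofReal (Real.exp (s * Y ω) - 1) := by
    intro ω
    have h1 : (1:ℝ) ≤ Real.exp (s * Y ω) := Real.one_le_exp (mul_nonneg hs.le (hY0 ω))
    rw [← ENNReal.ofReal_one, ← ENNReal.ofReal_add (by norm_num) (by linarith)]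
    congr 1
    ring
  have hsplit : ∫⁻ ω, ENNReal.ofReal (Real.exp (s * Y ω)) ∂μ =
      1 + ∫⁻ ω, ENNReal.ofReal (Real.exp (s * Y ω) - 1) ∂μ := by
    simp_rw [hdec]
    rw [lintegral_add_left measurable_const, lintegral_const]
    simp
  have hlayer : ∫⁻ ω, ENNReal.ofReal (Real.exp (s * Y ω) - 1) ∂μ =
      ∫⁻ t in Set.Ioi (0:ℝ), F t * E t := by
    have := lintegral_comp_eq_lintegral_meas_lt_mul μ (f := Y)
      (g := fun t => s * Real.exp (s * t))
      (Filter.Eventually.of_forall hY0) hY.aemeasurable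
      (fun t _ => sexp_intble s t)
      (Filter.Eventually.of_forall (fun t => by positivity))
    simp_rw [integral_s_exp hs] at this
    exact this
  set I := ∫⁻ t in Set.Ioi (0:ℝ), F t * E t with hI
  set J := ∫⁻ t in Set.Ioi (0:ℝ), G t * E t with hJ
  have hJval : J = ENNReal.ofReal (β * s / (α - s)) := J_compute hs hsα hβ.le
  have hJfin : J ≠ ⊤ := by rw [hJval]; exact ENNReal.ofReal_ne_top
  have hptle : ∀ t ∈ Set.Ioi (0:ℝ), F t * E t ≤ G t * E t := fun t ht =>
    mul_le_mul_left (htail t ht).le _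
  have hIJ : I ≤ J := by
    refine lintegral_mono_ae ?_
    filter_upwards [ae_restrict_mem measurableSet_Ioi] with t ht using hptle t ht
  have hIfin : I ≠ ⊤ := (lt_of_le_of_lt hIJ (lt_of_le_of_ne le_top hJfin)).ne
  have hEne : ∀ t : ℝ, E t ≠ 0 ∧ E t ≠ ⊤ := fun t =>
    ⟨(ENNReal.ofReal_pos.2 (by positivity)).ne', ENNReal.ofReal_ne_top⟩
  have hsub : ∫⁻ t in Set.Ioi (0:ℝ), (G t * E t - F t * E t) = J - I := by
    refine lintegral_sub ((hFmeas.mul hEmeas)) hIfin ?_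
    filter_upwards [ae_restrict_mem measurableSet_Ioi] with t ht using hptle t ht
  have hpos : 0 < ∫⁻ t in Set.Ioi (0:ℝ), (G t * E t - F t * E t) := by
    rw [lintegral_pos_iff_support (f := fun t => G t * E t - F t * E t) ((hGmeas.mul hEmeas).sub (hFmeas.mul hEmeas))]
    have hsupp : Set.Ioi (0:ℝ) ⊆ Function.support (fun t => G t * E t - F t * E t) := by
      intro t ht
      have hlt : F t * E t < G t * E t := by
        rw [ENNReal.mul_lt_mul_iff_left (hEne t).1 (hEne t).2]
        exact htail t ht
      simp only [Function.mem_support]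
      exact fun hzero => absurd (tsub_eq_zero_iff_le.1 hzero) (not_le.2 hlt)
    rw [Measure.restrict_apply' measurableSet_Ioi]
    calc (0:ℝ≥0∞) < volume (Set.Ioi (0:ℝ)) := by simp
      _ = volume (Function.support (fun t => G t * E t - F t * E t) ∩ Set.Ioi (0:ℝ)) := by
          rw [Set.inter_eq_right.2 hsupp]
  have hIJstrict : I < J := by
    rcases lt_or_eq_of_le hIJ with h | h
    · exact h
    · exfalso; rw [hsub, ← h] at hpos; simp [tsub_self] at hpos
  rw [hsplit, hlayer, ← hJval]
  exact ENNReal.add_lt_add_left (by norm_num) hIJstrict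

end AvgExpDecayAux

open AvgExpDecayAux

/-- Average of (not necessarily independent) nonnegative random variables with
exponentially decaying tails has an exponentially decaying tail. -/
theorem avg_exp_decay {Ω : Type*} [MeasurableSpace Ω] (μ : Measure Ω) [IsProbabilityMeasure μ]
    (m : ℕ) (hm : 0 < m) (α β : ℝ) (hα : 0 < α) (hβ : 0 < β)
    (X : Fin m → Ω → ℝ) (hX0 : ∀ i ω, 0 ≤ X i ω)
    (htail : ∀ i, ∀ x : ℝ, 0 < x → μ {ω | x < X i ω} < ENNReal.ofReal (β * Real.exp (-α * x)))
    (ε : ℝ) (hε : 0 < ε) :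
    ∀ x : ℝ, 0 < x →
      μ {ω | x < (1 / m : ℝ) * ∑ i, X i ω} <
        ENNReal.ofReal ((1 + β / ε) * Real.exp (-(α * x) / (1 + ε))) := by
  intro x hx
  have hm' : (0:ℝ) < (m:ℝ) := by exact_mod_cast hm
  set s : ℝ := α / (1 + ε) with hsdef
  have hs : 0 < s := by positivity
  have hsα : s < α := by
    rw [hsdef, div_lt_iff₀ (by linarith)]
    nlinarith
  have hβε : β * s / (α - s) = β / ε := by
    rw [hsdef]
    rw [show α - α / (1+ε) = α * ε / (1+ε) by field_simp; ring]
    field_simp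
  set T : ℝ := (m:ℝ) * x with hTdef
  have hT : 0 < T := by positivity
  set Y : Fin m → Ω → ℝ := fun i ω => (min (hull μ (X i) ω) (ENNReal.ofReal T)).toReal with hYdef
  have hYmeas : ∀ i, Measurable (Y i) := fun i =>
    ((hull_measurable μ (X i)).min measurable_const).ennreal_toReal
  have hY0 : ∀ i ω, 0 ≤ Y i ω := fun i ω => ENNReal.toReal_nonneg
  have hminfin : ∀ i ω, min (hull μ (X i) ω) (ENNReal.ofReal T) ≠ ⊤ := fun i ω =>
    (lt_of_le_of_lt (min_le_right _ _) ENNReal.ofReal_lt_top).ne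
  have hminle : ∀ i ω, min (X i ω) T ≤ Y i ω := by
    intro i ω
    have h1 : ENNReal.ofReal (min (X i ω) T) ≤ min (hull μ (X i) ω) (ENNReal.ofReal T) := by
      refine le_min ?_ ?_
      · exact le_trans (ENNReal.ofReal_le_ofReal (min_le_left _ _)) (le_hull μ (X i) ω)
      · exact ENNReal.ofReal_le_ofReal (min_le_right _ _)
    have := ENNReal.toReal_mono (hminfin i ω) h1
    rwa [ENNReal.toReal_ofReal (le_min (hX0 i ω) hT.le)] at this
  have hYtail : ∀ i, ∀ t : ℝ, 0 < t → μ {ω | t < Y i ω} < ENNReal.ofReal (β * Real.exp (-α * t)) := by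
    intro i t ht
    have hsub : {ω | t < Y i ω} ⊆ {ω | ENNReal.ofReal t < hull μ (X i) ω} := by
      intro ω hω
      rw [Set.mem_setOf_eq] at hω ⊢
      have h2 : ENNReal.ofReal t < min (hull μ (X i) ω) (ENNReal.ofReal T) :=
        (ENNReal.ofReal_lt_iff_lt_toReal ht.le (hminfin i ω)).2 hω
      exact lt_of_lt_of_le h2 (min_le_left _ _)
    calc μ {ω | t < Y i ω} ≤ μ {ω | ENNReal.ofReal t < hull μ (X i) ω} := measure_mono hsub
      _ ≤ μ {ω | t < X i ω} := hull_tail μ (X i) ht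
      _ < ENNReal.ofReal (β * Real.exp (-α * t)) := htail i t ht
  -- event inclusion
  have hEsub : {ω | x < (1 / m : ℝ) * ∑ i, X i ω} ⊆ {ω | x ≤ (1 / m : ℝ) * ∑ i, Y i ω} := by
    intro ω hω
    rw [Set.mem_setOf_eq] at hω ⊢
    by_cases hc : ∀ i, X i ω ≤ T
    · have hle : ∀ i, X i ω ≤ Y i ω := by
        intro i
        have := hminle i ω
        rwa [min_eq_left (hc i)] at this
      refine le_of_lt (lt_of_lt_of_le hω ?_)
      exact mul_le_mul_of_nonneg_left (Finset.sum_le_sum fun i _ => hle i) (by positivity)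
    · push_neg at hc
      obtain ⟨i₀, hi₀⟩ := hc
      have hYi₀ : T ≤ Y i₀ ω := by
        have := hminle i₀ ω
        rwa [min_eq_right hi₀.le] at this
      have hsum : T ≤ ∑ i, Y i ω :=
        le_trans hYi₀ (Finset.single_le_sum (fun i _ => hY0 i ω) (Finset.mem_univ i₀))
      calc x = (1 / m : ℝ) * T := by rw [hTdef]; field_simp
        _ ≤ (1 / m : ℝ) * ∑ i, Y i ω := mul_le_mul_of_nonneg_left hsum (by positivity)
  -- Markov
  set Z : Ω → ℝ≥0∞ := fun ω => ENNReal.ofReal (Real.exp (s * ((1 / m : ℝ) * ∑ i, Y i ω))) with hZdef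
  have hsummeas : Measurable (fun ω => ∑ i, Y i ω) := Finset.measurable_sum _ (fun i _ => hYmeas i)
  have hZmeas : Measurable Z :=
    (Real.measurable_exp.comp ((measurable_const.mul hsummeas).const_mul s)).ennreal_ofReal
  set a : ℝ≥0∞ := ENNReal.ofReal (Real.exp (s * x)) with hadef
  have ha0 : a ≠ 0 := (ENNReal.ofReal_pos.2 (Real.exp_pos _)).ne'
  have hatop : a ≠ ⊤ := ENNReal.ofReal_ne_top
  have hmono : {ω | x ≤ (1 / m : ℝ) * ∑ i, Y i ω} ⊆ {ω | a ≤ Z ω} := by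
    intro ω hω
    rw [Set.mem_setOf_eq] at hω ⊢
    exact ENNReal.ofReal_le_ofReal (Real.exp_le_exp.2 (mul_le_mul_of_nonneg_left hω hs.le))
  have hmarkov : μ {ω | a ≤ Z ω} ≤ a⁻¹ * ∫⁻ ω, Z ω ∂μ := by
    have h2 := mul_meas_ge_le_lintegral₀ (μ := μ) hZmeas.aemeasurable a
    have h3 := mul_le_mul_right h2 a⁻¹
    rwa [← mul_assoc, ENNReal.inv_mul_cancel ha0 hatop, one_mul] at h3
  -- Jensen + per-coordinate bound
  have hjensen : ∀ ω, Z ω ≤ ∑ i, ENNReal.ofReal (1 / m : ℝ) * ENNReal.ofReal (Real.exp (s * Y i ω)) := by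
    intro ω
    have h1 : Real.exp (s * ((1 / m : ℝ) * ∑ i, Y i ω)) ≤
        (1 / m : ℝ) * ∑ i, Real.exp (s * Y i ω) := by
      have h2 := exp_avg_le hm (fun i => s * Y i ω)
      have h3 : s * ((1 / m : ℝ) * ∑ i, Y i ω) = (1 / m : ℝ) * ∑ i, s * Y i ω := by
        rw [← Finset.mul_sum]; ring
      rw [h3]
      exact h2
    calc Z ω ≤ ENNReal.ofReal ((1 / m : ℝ) * ∑ i, Real.exp (s * Y i ω)) :=
          ENNReal.ofReal_le_ofReal h1
      _ = ∑ i, ENNReal.ofReal ((1 / m : ℝ) * Real.exp (s * Y i ω)) := by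
          rw [Finset.mul_sum, ENNReal.ofReal_sum_of_nonneg (fun i _ => by positivity)]
      _ = ∑ i, ENNReal.ofReal (1 / m : ℝ) * ENNReal.ofReal (Real.exp (s * Y i ω)) := by
          refine Finset.sum_congr rfl fun i _ => ?_
          rw [ENNReal.ofReal_mul (by positivity)]
  have hZint : ∫⁻ ω, Z ω ∂μ ≤
      ∑ i, ENNReal.ofReal (1 / m : ℝ) * ∫⁻ ω, ENNReal.ofReal (Real.exp (s * Y i ω)) ∂μ := by
    calc ∫⁻ ω, Z ω ∂μ
        ≤ ∫⁻ ω, ∑ i, ENNReal.ofReal (1 / m : ℝ) * ENNReal.ofReal (Real.exp (s * Y i ω)) ∂μ :=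
          lintegral_mono hjensen
      _ = ∑ i, ∫⁻ ω, ENNReal.ofReal (1 / m : ℝ) * ENNReal.ofReal (Real.exp (s * Y i ω)) ∂μ :=
          lintegral_finset_sum _ (fun i _ =>
            (measurable_const.mul (show Measurable fun ω => ENNReal.ofReal (Real.exp (s * Y i ω)) from (Real.measurable_exp.comp ((hYmeas i).const_mul s)).ennreal_ofReal)))
      _ = ∑ i, ENNReal.ofReal (1 / m : ℝ) * ∫⁻ ω, ENNReal.ofReal (Real.exp (s * Y i ω)) ∂μ := by
          refine Finset.sum_congr rfl fun i _ => ?_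
          rw [lintegral_const_mul _ (show Measurable fun ω => ENNReal.ofReal (Real.exp (s * Y i ω)) from (Real.measurable_exp.comp ((hYmeas i).const_mul s)).ennreal_ofReal)]
  set C : ℝ≥0∞ := 1 + ENNReal.ofReal (β / ε) with hCdef
  have hK : ∀ i, ∫⁻ ω, ENNReal.ofReal (Real.exp (s * Y i ω)) ∂μ < C := by
    intro i
    have := key_bound μ (Y i) (hYmeas i) (hY0 i) hs hsα hβ (hYtail i)
    rwa [hβε] at this
  -- sum bound via the max term
  have hsumK : ∑ i, ENNReal.ofReal (1 / m : ℝ) * ∫⁻ ω, ENNReal.ofReal (Real.exp (s * Y i ω)) ∂μ < C := by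
    have : Nonempty (Fin m) := ⟨⟨0, hm⟩⟩
    obtain ⟨i₀, -, hmax⟩ := Finset.exists_max_image Finset.univ
      (fun i => ∫⁻ ω, ENNReal.ofReal (Real.exp (s * Y i ω)) ∂μ) Finset.univ_nonempty
    have hle : ∑ i, ENNReal.ofReal (1 / m : ℝ) * ∫⁻ ω, ENNReal.ofReal (Real.exp (s * Y i ω)) ∂μ ≤
        ∫⁻ ω, ENNReal.ofReal (Real.exp (s * Y i₀ ω)) ∂μ := by
      calc ∑ i, ENNReal.ofReal (1 / m : ℝ) * ∫⁻ ω, ENNReal.ofReal (Real.exp (s * Y i ω)) ∂μ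
          ≤ ∑ _i : Fin m, ENNReal.ofReal (1 / m : ℝ) * ∫⁻ ω, ENNReal.ofReal (Real.exp (s * Y i₀ ω)) ∂μ :=
            Finset.sum_le_sum (fun i _ => mul_le_mul_right (hmax i (Finset.mem_univ i)) _)
        _ = (m : ℝ≥0∞) * (ENNReal.ofReal (1 / m : ℝ) * ∫⁻ ω, ENNReal.ofReal (Real.exp (s * Y i₀ ω)) ∂μ) := by
            rw [Finset.sum_const, Finset.card_univ, Fintype.card_fin, nsmul_eq_mul]
        _ = ((m : ℝ≥0∞) * ENNReal.ofReal (1 / m : ℝ)) * ∫⁻ ω, ENNReal.ofReal (Real.exp (s * Y i₀ ω)) ∂μ := by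
            rw [mul_assoc]
        _ = ∫⁻ ω, ENNReal.ofReal (Real.exp (s * Y i₀ ω)) ∂μ := by
            rw [show ((m:ℝ≥0∞)) = ENNReal.ofReal (m:ℝ) by simp [ENNReal.ofReal_natCast],
              ← ENNReal.ofReal_mul (by positivity)]
            rw [show (m:ℝ) * (1/m : ℝ) = 1 by field_simp]
            simp
    exact lt_of_le_of_lt hle (hK i₀)
  -- assemble
  have hfinal : μ {ω | x < (1 / m : ℝ) * ∑ i, X i ω} < a⁻¹ * C := by
    calc μ {ω | x < (1 / m : ℝ) * ∑ i, X i ω}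
        ≤ μ {ω | a ≤ Z ω} := measure_mono (hEsub.trans hmono)
      _ ≤ a⁻¹ * ∫⁻ ω, Z ω ∂μ := hmarkov
      _ ≤ a⁻¹ * (∑ i, ENNReal.ofReal (1 / m : ℝ) * ∫⁻ ω, ENNReal.ofReal (Real.exp (s * Y i ω)) ∂μ) :=
          mul_le_mul_right hZint _
      _ < a⁻¹ * C := by
          rw [ENNReal.mul_lt_mul_iff_right (ENNReal.inv_ne_zero.2 hatop) (ENNReal.inv_ne_top.2 ha0)]
          exact hsumK
  have haC : a⁻¹ * C = ENNReal.ofReal ((1 + β / ε) * Real.exp (-(α * x) / (1 + ε))) := by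
    rw [hadef, ← ENNReal.ofReal_inv_of_pos (Real.exp_pos _), ← Real.exp_neg]
    rw [hCdef, ← ENNReal.ofReal_one, ← ENNReal.ofReal_add (by norm_num) (by positivity),
      ← ENNReal.ofReal_mul (by positivity)]
    congr 1
    rw [show -(s * x) = -(α * x) / (1 + ε) by rw [hsdef]; field_simp]
    ring
  rwa [haC] at hfinal
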